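/- (Closed-form DiscVA for the forward and consistency of the CSA decomposition.) Let T > 0, σ > 0, r, r^f ∈ ℝ, s₀ > 0, K ∈ ℝ. On a probability space let W : [0,T] × Ω → ℝ be jointly measurable with W_0 = 0 and such that for every u ∈ [0,T] the law of W_u is Gaussian with mean 0 and variance u. Set S_u := s₀ · exp( (r − σ²/2) u + σ W_u ), the clean value V̂_u := S_u − K e^{−r(T−u)}, the front-office price P̂_0 := e^{−r^f T} · E[ S_T − K ], and the discounting adjustment DiscVA_0 := E[ ∫_0^T (r − r^f) e^{−r^f u} V̂_u du ]. Then: (i) DiscVA_0 = ( s₀ − K e^{−rT} ) · ( e^{(r − r^f) T} − 1 ); and (ii) P̂_0 − DiscVA_0 = s₀ − K e^{−rT}, i.e. the front-office price corrected by DiscVA coincides with the r-discounted clean value of the forward. -/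

import Mathlib

open MeasureTheory

open Real ProbabilityTheory in
open scoped ENNReal NNReal in
lemma gauss_mgf_aux (v c : ℝ) (hv : 0 < v) :
    Integrable (fun x => Real.exp (c * x)) (gaussianReal 0 v.toNNReal) ∧
    ∫ x, Real.exp (c * x) ∂(gaussianReal 0 v.toNNReal) = Real.exp (c ^ 2 * v / 2) := by
  have hv' : (v.toNNReal : ℝ) = v := Real.coe_toNNReal v hv.le
  have hvne : v.toNNReal ≠ 0 := by
    simp only [ne_eq, Real.toNNReal_eq_zero, not_le]; exact hv
  have hpdf : ∀ x : ℝ, gaussianPDFReal 0 v.toNNReal x * Real.exp (c * x)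
      = Real.exp (c ^ 2 * v / 2) * gaussianPDFReal (c * v) v.toNNReal x := by
    intro x
    simp only [gaussianPDFReal, hv', sub_zero]
    rw [mul_assoc, ← Real.exp_add, mul_left_comm, ← Real.exp_add]
    have h1 : -x ^ 2 / (2 * v) + c * x = c ^ 2 * v / 2 + -(x - c * v) ^ 2 / (2 * v) := by
      field_simp
      ring
    rw [h1]
  have hmeas : Measurable fun x => (gaussianPDFReal 0 v.toNNReal x).toNNReal :=
    (measurable_gaussianPDFReal _ _).real_toNNReal
  have hGR : gaussianReal 0 v.toNNReal
      = volume.withDensity (fun x => ((gaussianPDFReal 0 v.toNNReal x).toNNReal : ℝ≥0∞)) := by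
    rw [gaussianReal_of_var_ne_zero _ hvne]
    rfl
  constructor
  · rw [hGR, integrable_withDensity_iff_integrable_smul hmeas]
    have : (fun x => ((gaussianPDFReal 0 v.toNNReal x).toNNReal : ℝ≥0) • Real.exp (c * x))
        = fun x => Real.exp (c ^ 2 * v / 2) * gaussianPDFReal (c * v) v.toNNReal x := by
      funext x
      rw [NNReal.smul_def, Real.coe_toNNReal _ (gaussianPDFReal_nonneg _ _ _), smul_eq_mul, hpdf]
    rw [this]
    exact (integrable_gaussianPDFReal _ _).const_mul _
  · rw [hGR, integral_withDensity_eq_integral_smul hmeas]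
    have : (fun x => ((gaussianPDFReal 0 v.toNNReal x).toNNReal : ℝ≥0) • Real.exp (c * x))
        = fun x => Real.exp (c ^ 2 * v / 2) * gaussianPDFReal (c * v) v.toNNReal x := by
      funext x
      rw [NNReal.smul_def, Real.coe_toNNReal _ (gaussianPDFReal_nonneg _ _ _), smul_eq_mul, hpdf]
    rw [this, integral_const_mul, integral_gaussianPDFReal_eq_one _ hvne, mul_one]

/-- **Closed-form DiscVA for the forward and consistency of the CSA decomposition.**
For the forward with strike `K` on the lognormal asset `S_u = s₀ exp((r − σ²/2)u + σ W_u)`,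
with clean value `V̂_u = S_u − K e^{−r(T−u)}`, front-office price `P̂₀ = e^{−r^f T} E[S_T − K]`
and `DiscVA₀ = E[∫_0^T (r − r^f) e^{−r^f u} V̂_u du]`, one has
(i) `DiscVA₀ = (s₀ − K e^{−rT})(e^{(r − r^f)T} − 1)` and
(ii) `P̂₀ − DiscVA₀ = s₀ − K e^{−rT}`. -/
theorem forward_discVA_closed_form
    {Ω : Type*} {m0 : MeasurableSpace Ω} (μ : Measure Ω) [IsProbabilityMeasure μ]
    (T σ r rf s₀ K : ℝ) (hT : 0 < T) (hσ : 0 < σ) (hs₀ : 0 < s₀)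
    (W : ℝ → Ω → ℝ) (hW_meas : Measurable (Function.uncurry W))
    (hW0 : ∀ ω, W 0 ω = 0)
    (hW_law : ∀ u ∈ Set.Icc (0 : ℝ) T,
      μ.map (W u) = ProbabilityTheory.gaussianReal 0 (Real.toNNReal u)) :
    -- (i) closed form for `DiscVA₀`
    (∫ ω, (∫ u in Set.Ioc (0 : ℝ) T,
        (r - rf) * Real.exp (-rf * u) *
          (s₀ * Real.exp ((r - σ ^ 2 / 2) * u + σ * W u ω)
            - K * Real.exp (-r * (T - u)))) ∂μ)
      = (s₀ - K * Real.exp (-r * T)) * (Real.exp ((r - rf) * T) - 1) ∧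
    -- (ii) `P̂₀ − DiscVA₀ = s₀ − K e^{−rT}`
    Real.exp (-rf * T) *
        (∫ ω, (s₀ * Real.exp ((r - σ ^ 2 / 2) * T + σ * W T ω) - K) ∂μ)
      - (∫ ω, (∫ u in Set.Ioc (0 : ℝ) T,
          (r - rf) * Real.exp (-rf * u) *
            (s₀ * Real.exp ((r - σ ^ 2 / 2) * u + σ * W u ω)
              - K * Real.exp (-r * (T - u)))) ∂μ)
      = s₀ - K * Real.exp (-r * T) := by
  -- measurability of each W u
  have hWu : ∀ u : ℝ, Measurable (W u) := fun u =>
    hW_meas.comp (measurable_const.prodMk measurable_id)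
  -- exponential moments
  have key : ∀ c u : ℝ, 0 < u → u ≤ T →
      Integrable (fun ω => Real.exp (c * W u ω)) μ ∧
      ∫ ω, Real.exp (c * W u ω) ∂μ = Real.exp (c ^ 2 * u / 2) := by
    intro c u hu huT
    have hlaw := hW_law u ⟨hu.le, huT⟩
    obtain ⟨hint, hval⟩ := gauss_mgf_aux u c hu
    have hgm : AEStronglyMeasurable (fun x : ℝ => Real.exp (c * x)) (μ.map (W u)) :=
      (Real.measurable_exp.comp (measurable_id.const_mul c)).aestronglyMeasurable
    constructor
    · have h2 : Integrable (fun x : ℝ => Real.exp (c * x)) (μ.map (W u)) := by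
        rw [hlaw]; exact hint
      exact (integrable_map_measure hgm (hWu u).aemeasurable).mp h2
    · calc ∫ ω, Real.exp (c * W u ω) ∂μ
          = ∫ x, Real.exp (c * x) ∂(μ.map (W u)) :=
            (integral_map (hWu u).aemeasurable hgm).symm
        _ = Real.exp (c ^ 2 * u / 2) := by rw [hlaw]; exact hval
  -- pointwise-in-u expectation of the DiscVA integrand
  have hInner : ∀ u : ℝ, 0 < u → u ≤ T →
      Integrable (fun ω => (r - rf) * Real.exp (-rf * u) *
        (s₀ * Real.exp ((r - σ ^ 2 / 2) * u + σ * W u ω)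
          - K * Real.exp (-r * (T - u)))) μ ∧
      ∫ ω, (r - rf) * Real.exp (-rf * u) *
        (s₀ * Real.exp ((r - σ ^ 2 / 2) * u + σ * W u ω)
          - K * Real.exp (-r * (T - u))) ∂μ
        = (r - rf) * Real.exp ((r - rf) * u) * (s₀ - K * Real.exp (-r * T)) := by
    intro u hu huT
    obtain ⟨h1, h2⟩ := key σ u hu huT
    have heq : (fun ω => (r - rf) * Real.exp (-rf * u) *
        (s₀ * Real.exp ((r - σ ^ 2 / 2) * u + σ * W u ω) - K * Real.exp (-r * (T - u))))
        = fun ω => ((r - rf) * Real.exp (-rf * u) * (s₀ * Real.exp ((r - σ ^ 2 / 2) * u)))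
            * Real.exp (σ * W u ω)
          - (r - rf) * Real.exp (-rf * u) * (K * Real.exp (-r * (T - u))) := by
      funext ω; rw [Real.exp_add]; ring
    constructor
    · rw [heq]; exact (h1.const_mul _).sub (integrable_const _)
    · rw [heq, integral_sub (h1.const_mul _) (integrable_const _), integral_const_mul, h2,
        integral_const, probReal_univ, one_smul]
      have e1 : Real.exp ((r - σ ^ 2 / 2) * u) * Real.exp (σ ^ 2 * u / 2) = Real.exp (r * u) := by
        rw [← Real.exp_add]; congr 1; ring
      have e2 : Real.exp (-rf * u) * Real.exp (r * u) = Real.exp ((r - rf) * u) := by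
        rw [← Real.exp_add]; congr 1; ring
      have e3 : Real.exp (-rf * u) * Real.exp (-r * (T - u))
          = Real.exp ((r - rf) * u) * Real.exp (-r * T) := by
        rw [← Real.exp_add, ← Real.exp_add]; congr 1; ring
      linear_combination ((r - rf) * s₀ * Real.exp (-rf * u)) * e1
        + ((r - rf) * s₀) * e2 + (-(r - rf) * K) * e3
  -- joint measurability of the integrand
  have hGmeas : Measurable (fun p : ℝ × Ω => (r - rf) * Real.exp (-rf * p.1) *
      (s₀ * Real.exp ((r - σ ^ 2 / 2) * p.1 + σ * W p.1 p.2)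
        - K * Real.exp (-r * (T - p.1)))) := by
    have hW2 : Measurable (fun p : ℝ × Ω => W p.1 p.2) := hW_meas
    fun_prop
  -- integrability on the product measure
  have hGint : Integrable (fun p : ℝ × Ω => (r - rf) * Real.exp (-rf * p.1) *
      (s₀ * Real.exp ((r - σ ^ 2 / 2) * p.1 + σ * W p.1 p.2)
        - K * Real.exp (-r * (T - p.1))))
      ((volume.restrict (Set.Ioc (0 : ℝ) T)).prod μ) := by
    rw [integrable_prod_iff hGmeas.aestronglyMeasurable]
    constructor
    · refine (ae_restrict_iff' measurableSet_Ioc).mpr (ae_of_all _ fun u hu => ?_)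
      exact (hInner u hu.1 hu.2).1
    · have hmeasg : AEStronglyMeasurable
          (fun u => ∫ ω, ‖(r - rf) * Real.exp (-rf * u) *
            (s₀ * Real.exp ((r - σ ^ 2 / 2) * u + σ * W u ω)
              - K * Real.exp (-r * (T - u)))‖ ∂μ)
          (volume.restrict (Set.Ioc (0 : ℝ) T)) :=
        (hGmeas.aestronglyMeasurable.norm).integral_prod_right'
      refine Integrable.mono' (g := fun u => |r - rf| * Real.exp (-rf * u) *
          (s₀ * Real.exp ((r - σ ^ 2 / 2) * u) * Real.exp (σ ^ 2 * u / 2)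
            + |K| * Real.exp (-r * (T - u)))) ?_ hmeasg ?_
      · apply Continuous.integrableOn_Ioc
        fun_prop
      · refine (ae_restrict_iff' measurableSet_Ioc).mpr (ae_of_all _ fun u hu => ?_)
        obtain ⟨h1, h2⟩ := key σ u hu.1 hu.2
        rw [Real.norm_eq_abs, abs_of_nonneg (integral_nonneg fun ω => norm_nonneg _)]
        have heq2 : (fun ω => |r - rf| * Real.exp (-rf * u) *
            (s₀ * (Real.exp ((r - σ ^ 2 / 2) * u) * Real.exp (σ * W u ω))
              + |K| * Real.exp (-r * (T - u))))
            = fun ω => (|r - rf| * Real.exp (-rf * u) * (s₀ * Real.exp ((r - σ ^ 2 / 2) * u)))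
                * Real.exp (σ * W u ω)
              + |r - rf| * Real.exp (-rf * u) * (|K| * Real.exp (-r * (T - u))) := by
          funext ω; ring
        calc (∫ ω, ‖(r - rf) * Real.exp (-rf * u) *
              (s₀ * Real.exp ((r - σ ^ 2 / 2) * u + σ * W u ω)
                - K * Real.exp (-r * (T - u)))‖ ∂μ)
            ≤ ∫ ω, |r - rf| * Real.exp (-rf * u) *
              (s₀ * (Real.exp ((r - σ ^ 2 / 2) * u) * Real.exp (σ * W u ω))
                + |K| * Real.exp (-r * (T - u))) ∂μ := by
              refine integral_mono (hInner u hu.1 hu.2).1.norm ?_ fun ω => ?_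
              · rw [heq2]
                exact (h1.const_mul _).add (integrable_const _)
              · rw [Real.norm_eq_abs, abs_mul, abs_mul, Real.abs_exp]
                gcongr
                calc |s₀ * Real.exp ((r - σ ^ 2 / 2) * u + σ * W u ω)
                      - K * Real.exp (-r * (T - u))|
                    ≤ |s₀ * Real.exp ((r - σ ^ 2 / 2) * u + σ * W u ω)|
                      + |K * Real.exp (-r * (T - u))| := abs_sub _ _
                  _ = s₀ * (Real.exp ((r - σ ^ 2 / 2) * u) * Real.exp (σ * W u ω))
                      + |K| * Real.exp (-r * (T - u)) := by
                      rw [abs_mul, abs_mul, Real.abs_exp, Real.abs_exp,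
                        abs_of_pos hs₀, Real.exp_add]
          _ = |r - rf| * Real.exp (-rf * u) *
              (s₀ * Real.exp ((r - σ ^ 2 / 2) * u) * Real.exp (σ ^ 2 * u / 2)
                + |K| * Real.exp (-r * (T - u))) := by
              rw [heq2, integral_add (h1.const_mul _) (integrable_const _),
                integral_const_mul, h2, integral_const, probReal_univ,
                one_smul]
              ring
  -- FTC computation of the deterministic time integral
  have hI : ∫ u in Set.Ioc (0 : ℝ) T, (r - rf) * Real.exp ((r - rf) * u)
      = Real.exp ((r - rf) * T) - 1 := by
    rw [← intervalIntegral.integral_of_le hT.le]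
    have hd : ∀ u ∈ Set.uIcc (0 : ℝ) T,
        HasDerivAt (fun x => Real.exp ((r - rf) * x)) ((r - rf) * Real.exp ((r - rf) * u)) u := by
      intro u _
      simpa [mul_comm] using ((hasDerivAt_id u).const_mul (r - rf)).exp
    rw [intervalIntegral.integral_eq_sub_of_hasDerivAt hd
      ((by fun_prop : Continuous fun u => (r - rf) * Real.exp ((r - rf) * u)).intervalIntegrable 0 T)]
    simp
  -- main closed form for DiscVA
  have hmain : (∫ ω, (∫ u in Set.Ioc (0 : ℝ) T,
        (r - rf) * Real.exp (-rf * u) *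
          (s₀ * Real.exp ((r - σ ^ 2 / 2) * u + σ * W u ω)
            - K * Real.exp (-r * (T - u)))) ∂μ)
      = (s₀ - K * Real.exp (-r * T)) * (Real.exp ((r - rf) * T) - 1) := by
    have hswap := integral_integral_swap
      (f := fun (ω : Ω) (u : ℝ) => (r - rf) * Real.exp (-rf * u) *
        (s₀ * Real.exp ((r - σ ^ 2 / 2) * u + σ * W u ω)
          - K * Real.exp (-r * (T - u)))) hGint.swap
    rw [hswap]
    rw [setIntegral_congr_fun measurableSet_Ioc
      (fun u hu => (hInner u hu.1 hu.2).2)]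
    rw [integral_mul_const, hI]
    ring
  refine ⟨hmain, ?_⟩
  have hST : ∫ ω, (s₀ * Real.exp ((r - σ ^ 2 / 2) * T + σ * W T ω) - K) ∂μ
      = s₀ * Real.exp (r * T) - K := by
    obtain ⟨h1, h2⟩ := key σ T hT le_rfl
    have heq : (fun ω => s₀ * Real.exp ((r - σ ^ 2 / 2) * T + σ * W T ω) - K)
        = fun ω => (s₀ * Real.exp ((r - σ ^ 2 / 2) * T)) * Real.exp (σ * W T ω) - K := by
      funext ω; rw [Real.exp_add]; ring
    rw [heq, integral_sub (h1.const_mul _) (integrable_const _), integral_const_mul, h2,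
      integral_const, probReal_univ, one_smul, mul_assoc, ← Real.exp_add]
    congr 2
    ring
  rw [hST, hmain]
  have e1 : Real.exp (-rf * T) * Real.exp (r * T) = Real.exp ((r - rf) * T) := by
    rw [← Real.exp_add]; congr 1; ring
  have e2 : Real.exp (-r * T) * Real.exp ((r - rf) * T) = Real.exp (-rf * T) := by
    rw [← Real.exp_add]; congr 1; ring
  linear_combination s₀ * e1 + K * e2
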